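/- Let f, h : Br_n → ℝ be functions such that Σ_{x ∈ Br_n} |f(x)| and Σ_{x ∈ Br_n} |h(x)| are convergent. Then h is the Möbius transform of f, i.e. h(x) = Σ_{X ⊆ Σ} (−1)^{|X|} f(x·Δ̂(X)) for every x ∈ Br_n (a finite sum over the subsets X of the generating set Σ), if and only if f(x) = Σ_{y ∈ Br_n} h(x·y) for every x ∈ Br_n (the latter series converging absolutely). -/

import Mathlib

open scoped Classical

namespace BraidMeasure

/-- Defining relations of the positive braid monoid on `n` strands,
with Artin generators indexed by `Fin (n - 1)`. -/
inductive BraidRel (n : ℕ) :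
    FreeMonoid (Fin (n - 1)) → FreeMonoid (Fin (n - 1)) → Prop
  | comm (i j : Fin (n - 1)) (h : (i : ℕ) + 2 ≤ (j : ℕ)) :
      BraidRel n (FreeMonoid.of i * FreeMonoid.of j)
        (FreeMonoid.of j * FreeMonoid.of i)
  | braid (i j : Fin (n - 1)) (h : (i : ℕ) + 1 = (j : ℕ)) :
      BraidRel n (FreeMonoid.of i * FreeMonoid.of j * FreeMonoid.of i)
        (FreeMonoid.of j * FreeMonoid.of i * FreeMonoid.of j)

/-- The positive braid monoid `Br_n`, presented by the Artin relations. -/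
def BraidMonoid (n : ℕ) : Type := (conGen (BraidRel n)).Quotient

instance (n : ℕ) : Monoid (BraidMonoid n) :=
  inferInstanceAs (Monoid (conGen (BraidRel n)).Quotient)

/-- The Artin generator `σ_{i+1}` of `Br_n`. -/
def gen {n : ℕ} (i : Fin (n - 1)) : BraidMonoid n :=
  (conGen (BraidRel n)).mk' (FreeMonoid.of i)

/-- Left divisibility: `x ≤_l y` iff `∃ z, y = x * z`. -/
def ldvd {n : ℕ} (x y : BraidMonoid n) : Prop := ∃ z, y = x * z

/-- Right divisibility: `x ≤_r y` iff `∃ z, y = z * x`. -/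
def rdvd {n : ℕ} (x y : BraidMonoid n) : Prop := ∃ z, y = z * x

/-- `σ_{i+1}` for a natural number index, with junk value `1` out of range. -/
def gen' {n : ℕ} (i : ℕ) : BraidMonoid n :=
  if h : i < n - 1 then gen ⟨i, h⟩ else 1

/-- The Garside element `Δ_n = (σ_1 ⋯ σ_{n-1})(σ_1 ⋯ σ_{n-2}) ⋯ (σ_1 σ_2) σ_1`. -/
def garside (n : ℕ) : BraidMonoid n :=
  ((List.range (n - 1)).map fun j =>
    ((List.range (n - 1 - j)).map fun i => (gen' i : BraidMonoid n)).prod).prod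

/-- The set of simple braids: left divisors of `Δ_n`. -/
def Simples (n : ℕ) : Set (BraidMonoid n) := {x | ldvd x (garside n)}

/-- `L(y) = {σ_i : σ_i ≤_l y}` (as a set of indices). -/
def Lset {n : ℕ} (y : BraidMonoid n) : Set (Fin (n - 1)) := {i | ldvd (gen i) y}

/-- `R(x) = {σ_i : x · σ_i ∉ S}` (as a set of indices). -/
def Rset {n : ℕ} (x : BraidMonoid n) : Set (Fin (n - 1)) :=
  {i | x * gen i ∉ Simples n}

/-- The relation `x → y` between simple braids: `L(y) ⊆ R(x)`. -/
def Arrow {n : ℕ} (x y : BraidMonoid n) : Prop := Lset y ⊆ Rset x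

/-- The Möbius polynomial of the positive braid monoid:
`H_0 = H_1 = 1`, `H_n = ∑_{k=1}^{n} (-1)^{k+1} t^{k(k-1)/2} H_{n-k}`. -/
noncomputable def mobiusH : ℕ → Polynomial ℤ
  | 0 => 1
  | 1 => 1
  | (n + 2) =>
      ∑ j ∈ Finset.range (n + 2),
        (-1 : Polynomial ℤ) ^ j * Polynomial.X ^ ((j + 1) * j / 2) * mobiusH (n + 1 - j)
  termination_by n => n
  decreasing_by omega


abbrev Ltr (n : ℕ) := Fin (n - 1)
def far {n : ℕ} (i j : Ltr n) : Prop := (i : ℕ) + 2 ≤ (j : ℕ) ∨ (j : ℕ) + 2 ≤ (i : ℕ)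
def adj {n : ℕ} (i j : Ltr n) : Prop := (i : ℕ) + 1 = (j : ℕ) ∨ (j : ℕ) + 1 = (i : ℕ)
lemma far.symm {n : ℕ} {i j : Ltr n} (h : far i j) : far j i := h.elim .inr .inl
lemma adj.symm {n : ℕ} {i j : Ltr n} (h : adj i j) : adj j i := h.elim .inr .inl
lemma tri {n : ℕ} (i j : Ltr n) : i = j ∨ far i j ∨ adj i j := by
  rcases eq_or_ne i j with h | h
  · exact .inl h
  · have : (i : ℕ) ≠ j := fun hc => h (Fin.ext hc)
    unfold far adj; omega
lemma far_ne {n : ℕ} {i j : Ltr n} (h : far i j) : i ≠ j := by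
  rintro rfl; unfold far at h; omega
lemma adj_ne {n : ℕ} {i j : Ltr n} (h : adj i j) : i ≠ j := by
  rintro rfl; unfold adj at h; omega
lemma far_not_adj {n : ℕ} {i j : Ltr n} (h : far i j) : ¬ adj i j := by
  unfold far adj at *; omega
lemma adj_not_far {n : ℕ} {i j : Ltr n} (h : adj i j) : ¬ far i j :=
  fun hf => far_not_adj hf h
lemma not_adj_chain {n : ℕ} {i q j : Ltr n} (h1 : adj i q) (h2 : adj q j) (h3 : adj i j) :
    False := by
  rcases h1 with h1 | h1 <;> rcases h2 with h2 | h2 <;> rcases h3 with h3 | h3 <;> omega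
inductive Bstep (n : ℕ) : List (Ltr n) → List (Ltr n) → Prop
  | comm (a b : List (Ltr n)) (i j : Ltr n) (h : far i j) :
      Bstep n (a ++ i :: j :: b) (a ++ j :: i :: b)
  | braid (a b : List (Ltr n)) (i j : Ltr n) (h : adj i j) :
      Bstep n (a ++ i :: j :: i :: b) (a ++ j :: i :: j :: b)
lemma Bstep.symm {n : ℕ} {u v : List (Ltr n)} (h : Bstep n u v) : Bstep n v u := by
  cases h with
  | comm a b i j h => exact .comm a b j i h.symm
  | braid a b i j h => exact .braid a b j i h.symm
lemma Bstep.length_eq {n : ℕ} {u v : List (Ltr n)} (h : Bstep n u v) :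
    u.length = v.length := by
  cases h <;> simp
inductive Chain (n : ℕ) : ℕ → List (Ltr n) → List (Ltr n) → Prop
  | refl (u : List (Ltr n)) : Chain n 0 u u
  | cons {k : ℕ} {u v w : List (Ltr n)} :
      Bstep n u v → Chain n k v w → Chain n (k + 1) u w
def Beq (n : ℕ) (u v : List (Ltr n)) : Prop := ∃ k, Chain n k u v
lemma Beq.refl {n : ℕ} (u : List (Ltr n)) : Beq n u u := ⟨0, .refl u⟩
lemma Chain.trans {n k m : ℕ} {u v w : List (Ltr n)}
    (h : Chain n k u v) (h' : Chain n m v w) : Chain n (k + m) u w := by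
  induction h with
  | refl => simpa using h'
  | cons s c ih => exact (Nat.add_right_comm _ 1 m) ▸ .cons s (ih h')
lemma Beq.trans {n : ℕ} {u v w : List (Ltr n)} (h : Beq n u v) (h' : Beq n v w) :
    Beq n u w := by
  obtain ⟨k, hk⟩ := h; obtain ⟨m, hm⟩ := h'; exact ⟨k + m, hk.trans hm⟩
lemma Bstep.beq {n : ℕ} {u v : List (Ltr n)} (h : Bstep n u v) : Beq n u v :=
  ⟨1, .cons h (.refl v)⟩
lemma Beq.symm {n : ℕ} {u v : List (Ltr n)} (h : Beq n u v) : Beq n v u := by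
  obtain ⟨k, hk⟩ := h
  induction hk with
  | refl => exact Beq.refl _
  | cons s _ ih => exact ih.trans s.symm.beq
lemma Beq.length_eq {n : ℕ} {u v : List (Ltr n)} (h : Beq n u v) :
    u.length = v.length := by
  obtain ⟨k, hk⟩ := h
  induction hk with
  | refl => rfl
  | cons s _ ih => exact s.length_eq.trans ih
lemma Bstep.context {n : ℕ} {u v : List (Ltr n)} (c d : List (Ltr n))
    (h : Bstep n u v) : Bstep n (c ++ u ++ d) (c ++ v ++ d) := by
  cases h with
  | comm a b i j h => simpa using Bstep.comm (c ++ a) (b ++ d) i j h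
  | braid a b i j h => simpa using Bstep.braid (c ++ a) (b ++ d) i j h
lemma Beq.context {n : ℕ} {u v : List (Ltr n)} (c d : List (Ltr n))
    (h : Beq n u v) : Beq n (c ++ u ++ d) (c ++ v ++ d) := by
  obtain ⟨k, hk⟩ := h
  induction hk with
  | refl => exact Beq.refl _
  | cons s _ ih => exact (s.context c d).beq.trans ih
lemma Beq.cons {n : ℕ} (x : Ltr n) {u v : List (Ltr n)} (h : Beq n u v) :
    Beq n (x :: u) (x :: v) := by simpa using h.context [x] []
lemma Beq.append_right {n : ℕ} {u v : List (Ltr n)} (d : List (Ltr n)) (h : Beq n u v) :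
    Beq n (u ++ d) (v ++ d) := by simpa using h.context [] d
lemma Beq.append_left {n : ℕ} {u v : List (Ltr n)} (c : List (Ltr n)) (h : Beq n u v) :
    Beq n (c ++ u) (c ++ v) := by simpa using h.context c []
lemma beq_swap {n : ℕ} {i j : Ltr n} (h : far i j) (w : List (Ltr n)) :
    Beq n (i :: j :: w) (j :: i :: w) := (Bstep.comm [] w i j h).beq
lemma beq_braid {n : ℕ} {i j : Ltr n} (h : adj i j) (w : List (Ltr n)) :
    Beq n (i :: j :: i :: w) (j :: i :: j :: w) := (Bstep.braid [] w i j h).beq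

/-- The complement of `i` in the lcm of `i` and `j`: `i * comp i j = j * comp j i = lcm`. -/
noncomputable def comp {n : ℕ} (i j : Ltr n) : List (Ltr n) :=
  if i = j then [] else if far i j then [j] else [j, i]

lemma comp_self {n : ℕ} (i : Ltr n) : comp i i = [] := if_pos rfl
lemma comp_far {n : ℕ} {i j : Ltr n} (h : far i j) : comp i j = [j] := by
  rw [comp, if_neg (far_ne h), if_pos h]
lemma comp_adj {n : ℕ} {i j : Ltr n} (h : adj i j) : comp i j = [j, i] := by
  rw [comp, if_neg (adj_ne h), if_neg (adj_not_far h)]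

lemma Bstep.cases' {n : ℕ} {z m : List (Ltr n)} (s : Bstep n z m) :
    (∃ a b p q, far p q ∧ z = a ++ p :: q :: b ∧ m = a ++ q :: p :: b) ∨
    (∃ a b p q, adj p q ∧ z = a ++ p :: q :: p :: b ∧ m = a ++ q :: p :: q :: b) := by
  cases s with
  | comm a b i j h => exact .inl ⟨a, b, i, j, h, rfl, rfl⟩
  | braid a b i j h => exact .inr ⟨a, b, i, j, h, rfl, rfl⟩

lemma Chain.cases' {n k : ℕ} {z z' : List (Ltr n)} (hc : Chain n k z z') :
    (k = 0 ∧ z = z') ∨ ∃ k' m, k = k' + 1 ∧ Bstep n z m ∧ Chain n k' m z' := by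
  cases hc with
  | refl => exact .inl ⟨rfl, rfl⟩
  | cons s c => exact .inr ⟨_, _, rfl, s, c⟩

/-- **Garside's cancellation lemma.** -/
theorem key {n : ℕ} (ℓ : ℕ) : ∀ (u v : List (Ltr n)) (i j : Ltr n),
    u.length ≤ ℓ → Beq n (i :: u) (j :: v) →
    ∃ w, Beq n u (comp i j ++ w) ∧ Beq n v (comp j i ++ w) := by
  induction ℓ using Nat.strong_induction_on with
  | _ ℓ ihℓ =>
  suffices H : ∀ k, ∀ (u v : List (Ltr n)) (i j : Ltr n), u.length ≤ ℓ →
      Chain n k (i :: u) (j :: v) →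
      ∃ w, Beq n u (comp i j ++ w) ∧ Beq n v (comp j i ++ w) by
    rintro u v i j hu ⟨k, hc⟩
    exact H k u v i j hu hc
  intro k
  induction k using Nat.strong_induction_on with
  | _ k ihk =>
  intro u v i j hu hc
  rcases hc.cases' with ⟨rfl, he⟩ | ⟨k', m, rfl, s, c⟩
  · -- trivial chain
    injection he with h1 h2
    subst h1; subst h2
    exact ⟨u, by rw [comp_self]; exact Beq.refl u, by rw [comp_self]; exact Beq.refl u⟩
  rcases s.cases' with ⟨a, b, p, q, hpq, he, rfl⟩ | ⟨a, b, p, q, hpq, he, rfl⟩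
  · -- first step is a commutation
    cases a with
    | cons x a' =>
      -- step inside u
      simp only [List.cons_append] at he
      injection he with h1 h2
      subst h1; subst h2
      simp only [List.cons_append] at c
      have hlen : (a' ++ q :: p :: b).length ≤ ℓ := by
        simpa using hu
      obtain ⟨w, h1, h2⟩ := ihk k' (by omega) _ v i j hlen c
      exact ⟨w, ((Bstep.comm a' b p q hpq).beq).trans h1, h2⟩
    | nil =>
      simp only [List.nil_append] at he c
      injection he with h1 h2
      subst h1; subst h2
      -- now u = q :: b, step was i·q ↦ q·i with far i q (hpq : far i q)
      have hlen : (i :: b).length ≤ ℓ := by simpa using hu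
      obtain ⟨w₁, h1, h2⟩ := ihk k' (by omega) (i :: b) v q j hlen c
      rcases tri q j with rfl | hqj | hqj
      · -- q = j
        rw [comp_self] at h1 h2
        simp only [List.nil_append] at h1 h2
        refine ⟨b, ?_, ?_⟩
        · rw [comp_far hpq]; exact Beq.refl _
        · rw [comp_far hpq.symm]
          simp only [List.cons_append, List.nil_append]
          exact h2.trans h1.symm
      · -- far q j
        rw [comp_far hqj] at h1
        rw [comp_far hqj.symm] at h2
        simp only [List.cons_append, List.nil_append] at h1 h2
        have hbl : b.length < ℓ := by
          have := hu; simp only [List.length_cons] at this; omega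
        obtain ⟨w₂, g1, g2⟩ := ihℓ b.length hbl b w₁ i j le_rfl h1
        rcases tri i j with rfl | hij | hij
        · -- i = j
          rw [comp_self] at g1 g2
          simp only [List.nil_append] at g1 g2
          refine ⟨q :: b, ?_, ?_⟩
          · rw [comp_self]; exact Beq.refl _
          · rw [comp_self]
            simp only [List.nil_append]
            exact h2.trans (Beq.cons q (g2.trans g1.symm))
        · -- far i j
          rw [comp_far hij] at g1 ⊢
          rw [comp_far hij.symm] at g2
          simp only [List.cons_append, List.nil_append] at g1 g2 ⊢
          refine ⟨q :: w₂, ?_, ?_⟩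
          · exact (Beq.cons q g1).trans (beq_swap hqj w₂)
          · rw [comp_far hij.symm]
            simp only [List.cons_append, List.nil_append]
            exact h2.trans ((Beq.cons q g2).trans (beq_swap hpq.symm w₂))
        · -- adj i j
          rw [comp_adj hij] at g1 ⊢
          rw [comp_adj hij.symm] at g2
          simp only [List.cons_append, List.nil_append] at g1 g2 ⊢
          refine ⟨q :: w₂, ?_, ?_⟩
          · have s1 : Beq n (q :: b) (q :: j :: i :: w₂) := Beq.cons q g1
            have s2 : Beq n (q :: j :: i :: w₂) (j :: q :: i :: w₂) := beq_swap hqj _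
            have s3 : Beq n (j :: q :: i :: w₂) (j :: i :: q :: w₂) :=
              Beq.cons j (beq_swap hpq.symm w₂)
            exact s1.trans (s2.trans s3)
          · rw [comp_adj hij.symm]
            simp only [List.cons_append, List.nil_append]
            have s1 : Beq n v (q :: i :: j :: w₂) := h2.trans (Beq.cons q g2)
            have s2 : Beq n (q :: i :: j :: w₂) (i :: q :: j :: w₂) := beq_swap hpq.symm _
            have s3 : Beq n (i :: q :: j :: w₂) (i :: j :: q :: w₂) :=
              Beq.cons i (beq_swap hqj w₂)
            exact s1.trans (s2.trans s3)
      · -- adj q j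
        rw [comp_adj hqj] at h1
        rw [comp_adj hqj.symm] at h2
        simp only [List.cons_append, List.nil_append] at h1 h2
        have hbl : b.length < ℓ := by
          have := hu; simp only [List.length_cons] at this; omega
        obtain ⟨w₂, g1, g2⟩ := ihℓ b.length hbl b (q :: w₁) i j le_rfl h1
        have hw₁ : b.length = w₁.length + 1 := by
          have := h1.length_eq; simp only [List.length_cons] at this; omega
        rcases tri i j with rfl | hij | hij
        · -- i = j : impossible
          exact absurd hqj (far_not_adj hpq.symm)
        · -- far i j
          rw [comp_far hij] at g1 ⊢
          rw [comp_far hij.symm] at g2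
          simp only [List.cons_append, List.nil_append] at g1 g2 ⊢
          have hw₁l : w₁.length < ℓ := by omega
          obtain ⟨w₃, f1, f2⟩ := ihℓ w₁.length hw₁l w₁ w₂ q i le_rfl g2
          rw [comp_far hpq.symm] at f1
          rw [comp_far hpq] at f2
          simp only [List.cons_append, List.nil_append] at f1 f2
          refine ⟨q :: j :: w₃, ?_, ?_⟩
          · have s1 : Beq n (q :: b) (q :: j :: w₂) := Beq.cons q g1
            have s2 : Beq n (q :: j :: w₂) (q :: j :: q :: w₃) :=
              Beq.cons q (Beq.cons j f2)
            have s3 : Beq n (q :: j :: q :: w₃) (j :: q :: j :: w₃) := beq_braid hqj w₃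
            exact s1.trans (s2.trans s3)
          · rw [comp_far hij.symm]
            simp only [List.cons_append, List.nil_append]
            have s1 : Beq n v (q :: j :: i :: w₃) :=
              h2.trans (Beq.cons q (Beq.cons j f1))
            have s2 : Beq n (q :: j :: i :: w₃) (q :: i :: j :: w₃) :=
              Beq.cons q (beq_swap hij.symm w₃)
            have s3 : Beq n (q :: i :: j :: w₃) (i :: q :: j :: w₃) :=
              beq_swap hpq.symm _
            exact s1.trans (s2.trans s3)
        · -- adj i j
          rw [comp_adj hij] at g1 ⊢
          rw [comp_adj hij.symm] at g2
          simp only [List.cons_append, List.nil_append] at g1 g2 ⊢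
          have hw₁l : w₁.length < ℓ := by omega
          obtain ⟨w₃, f1, f2⟩ := ihℓ w₁.length hw₁l w₁ (j :: w₂) q i le_rfl g2
          rw [comp_far hpq.symm] at f1
          rw [comp_far hpq] at f2
          simp only [List.cons_append, List.nil_append] at f1 f2
          have hw₂ : b.length = w₂.length + 2 := by
            have := g1.length_eq; simp only [List.length_cons] at this; omega
          have hw₂l : w₂.length < ℓ := by omega
          obtain ⟨w₄, e1, e2⟩ := ihℓ w₂.length hw₂l w₂ w₃ j q le_rfl f2
          rw [comp_adj hqj.symm] at e1
          rw [comp_adj hqj] at e2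
          simp only [List.cons_append, List.nil_append] at e1 e2
          refine ⟨q :: j :: i :: w₄, ?_, ?_⟩
          · have s1 : Beq n (q :: b) (q :: j :: i :: w₂) := Beq.cons q g1
            have s2 : Beq n (q :: j :: i :: w₂) (q :: j :: i :: q :: j :: w₄) :=
              Beq.cons q (Beq.cons j (Beq.cons i e1))
            have s3 : Beq n (q :: j :: i :: q :: j :: w₄) (q :: j :: q :: i :: j :: w₄) :=
              Beq.cons q (Beq.cons j (beq_swap hpq (j :: w₄)))
            have s4 : Beq n (q :: j :: q :: i :: j :: w₄) (j :: q :: j :: i :: j :: w₄) :=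
              beq_braid hqj _
            have s5 : Beq n (j :: q :: j :: i :: j :: w₄) (j :: q :: i :: j :: i :: w₄) :=
              Beq.cons j (Beq.cons q (beq_braid hij.symm w₄))
            have s6 : Beq n (j :: q :: i :: j :: i :: w₄) (j :: i :: q :: j :: i :: w₄) :=
              Beq.cons j (beq_swap hpq.symm _)
            exact s1.trans (s2.trans (s3.trans (s4.trans (s5.trans s6))))
          · rw [comp_adj hij.symm]
            simp only [List.cons_append, List.nil_append]
            have s1 : Beq n v (q :: j :: i :: w₃) :=
              h2.trans (Beq.cons q (Beq.cons j f1))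
            have s2 : Beq n (q :: j :: i :: w₃) (q :: j :: i :: j :: q :: w₄) :=
              Beq.cons q (Beq.cons j (Beq.cons i e2))
            have s3 : Beq n (q :: j :: i :: j :: q :: w₄) (q :: i :: j :: i :: q :: w₄) :=
              Beq.cons q (beq_braid hij.symm (q :: w₄))
            have s4 : Beq n (q :: i :: j :: i :: q :: w₄) (i :: q :: j :: i :: q :: w₄) :=
              beq_swap hpq.symm _
            have s5 : Beq n (i :: q :: j :: i :: q :: w₄) (i :: q :: j :: q :: i :: w₄) :=
              Beq.cons i (Beq.cons q (Beq.cons j (beq_swap hpq w₄)))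
            have s6 : Beq n (i :: q :: j :: q :: i :: w₄) (i :: j :: q :: j :: i :: w₄) :=
              Beq.cons i (beq_braid hqj (i :: w₄))
            exact s1.trans (s2.trans (s3.trans (s4.trans (s5.trans s6))))
  · -- first step is a braid move
    cases a with
    | cons x a' =>
      simp only [List.cons_append] at he
      injection he with h1 h2
      subst h1; subst h2
      simp only [List.cons_append] at c
      have hlen : (a' ++ q :: p :: q :: b).length ≤ ℓ := by
        simpa using hu
      obtain ⟨w, h1, h2⟩ := ihk k' (by omega) _ v i j hlen c
      exact ⟨w, ((Bstep.braid a' b p q hpq).beq).trans h1, h2⟩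
    | nil =>
      simp only [List.nil_append] at he c
      injection he with h1 h2
      subst h1; subst h2
      -- u = q :: i :: b, hpq : adj i q, step i·q·i ↦ q·i·q
      have hlen : (i :: q :: b).length ≤ ℓ := by simpa using hu
      obtain ⟨w₁, h1, h2⟩ := ihk k' (by omega) (i :: q :: b) v q j hlen c
      rcases tri q j with rfl | hqj | hqj
      · -- q = j
        rw [comp_self] at h1 h2
        simp only [List.nil_append] at h1 h2
        refine ⟨b, ?_, ?_⟩
        · rw [comp_adj hpq]
          simp only [List.cons_append, List.nil_append]
          exact Beq.refl _
        · rw [comp_adj hpq.symm]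
          simp only [List.cons_append, List.nil_append]
          exact h2.trans h1.symm
      · -- far q j
        rw [comp_far hqj] at h1
        rw [comp_far hqj.symm] at h2
        simp only [List.cons_append, List.nil_append] at h1 h2
        have hql : (q :: b).length < ℓ := by
          have := hu; simp only [List.length_cons] at this ⊢; omega
        obtain ⟨w₂, g1, g2⟩ := ihℓ (q :: b).length hql (q :: b) w₁ i j le_rfl h1
        rcases tri i j with rfl | hij | hij
        · -- i = j : impossible since adj i q and far q i
          exact absurd hpq.symm (far_not_adj hqj)
        · -- far i j
          rw [comp_far hij] at g1 ⊢
          rw [comp_far hij.symm] at g2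
          simp only [List.cons_append, List.nil_append] at g1 g2 ⊢
          have hbl : b.length < ℓ := by
            have := hu; simp only [List.length_cons] at this; omega
          obtain ⟨w₃, f1, f2⟩ := ihℓ b.length hbl b w₂ q j le_rfl g1
          rw [comp_far hqj] at f1
          rw [comp_far hqj.symm] at f2
          simp only [List.cons_append, List.nil_append] at f1 f2
          refine ⟨q :: i :: w₃, ?_, ?_⟩
          · have s1 : Beq n (q :: i :: b) (q :: i :: j :: w₃) :=
              Beq.cons q (Beq.cons i f1)
            have s2 : Beq n (q :: i :: j :: w₃) (q :: j :: i :: w₃) :=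
              Beq.cons q (beq_swap hij w₃)
            have s3 : Beq n (q :: j :: i :: w₃) (j :: q :: i :: w₃) :=
              beq_swap hqj _
            exact s1.trans (s2.trans s3)
          · rw [comp_far hij.symm]
            simp only [List.cons_append, List.nil_append]
            have s1 : Beq n v (q :: i :: w₂) := h2.trans (Beq.cons q g2)
            have s2 : Beq n (q :: i :: w₂) (q :: i :: q :: w₃) :=
              Beq.cons q (Beq.cons i f2)
            have s3 : Beq n (q :: i :: q :: w₃) (i :: q :: i :: w₃) :=
              beq_braid hpq.symm w₃
            exact s1.trans (s2.trans s3)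
        · -- adj i j
          rw [comp_adj hij] at g1 ⊢
          rw [comp_adj hij.symm] at g2
          simp only [List.cons_append, List.nil_append] at g1 g2 ⊢
          have hbl : b.length < ℓ := by
            have := hu; simp only [List.length_cons] at this; omega
          obtain ⟨w₃, f1, f2⟩ := ihℓ b.length hbl b (i :: w₂) q j le_rfl g1
          rw [comp_far hqj] at f1
          rw [comp_far hqj.symm] at f2
          simp only [List.cons_append, List.nil_append] at f1 f2
          have hw₂ : w₂.length + 1 = b.length := by
            have := f2.length_eq
            have := g1.length_eq
            simp only [List.length_cons] at *; omega
          have hw₂l : w₂.length < ℓ := by omega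
          obtain ⟨w₄, e1, e2⟩ := ihℓ w₂.length hw₂l w₂ w₃ i q le_rfl f2
          rw [comp_adj hpq] at e1
          rw [comp_adj hpq.symm] at e2
          simp only [List.cons_append, List.nil_append] at e1 e2
          refine ⟨q :: i :: j :: w₄, ?_, ?_⟩
          · have s1 : Beq n (q :: i :: b) (q :: i :: j :: w₃) :=
              Beq.cons q (Beq.cons i f1)
            have s2 : Beq n (q :: i :: j :: w₃) (q :: i :: j :: i :: q :: w₄) :=
              Beq.cons q (Beq.cons i (Beq.cons j e2))
            have s3 : Beq n (q :: i :: j :: i :: q :: w₄) (q :: j :: i :: j :: q :: w₄) :=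
              Beq.cons q (beq_braid hij (q :: w₄))
            have s4 : Beq n (q :: j :: i :: j :: q :: w₄) (j :: q :: i :: j :: q :: w₄) :=
              beq_swap hqj _
            have s5 : Beq n (j :: q :: i :: j :: q :: w₄) (j :: q :: i :: q :: j :: w₄) :=
              Beq.cons j (Beq.cons q (Beq.cons i (beq_swap hqj.symm w₄)))
            have s6 : Beq n (j :: q :: i :: q :: j :: w₄) (j :: i :: q :: i :: j :: w₄) :=
              Beq.cons j (beq_braid hpq.symm (j :: w₄))
            exact s1.trans (s2.trans (s3.trans (s4.trans (s5.trans s6))))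
          · rw [comp_adj hij.symm]
            simp only [List.cons_append, List.nil_append]
            have s1 : Beq n v (q :: i :: j :: w₂) :=
              h2.trans (Beq.cons q g2)
            have s2 : Beq n (q :: i :: j :: w₂) (q :: i :: j :: q :: i :: w₄) :=
              Beq.cons q (Beq.cons i (Beq.cons j e1))
            have s3 : Beq n (q :: i :: j :: q :: i :: w₄) (q :: i :: q :: j :: i :: w₄) :=
              Beq.cons q (Beq.cons i (beq_swap hqj.symm (i :: w₄)))
            have s4 : Beq n (q :: i :: q :: j :: i :: w₄) (i :: q :: i :: j :: i :: w₄) :=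
              beq_braid hpq.symm _
            have s5 : Beq n (i :: q :: i :: j :: i :: w₄) (i :: q :: j :: i :: j :: w₄) :=
              Beq.cons i (Beq.cons q (beq_braid hij w₄))
            have s6 : Beq n (i :: q :: j :: i :: j :: w₄) (i :: j :: q :: i :: j :: w₄) :=
              Beq.cons i (beq_swap hqj (i :: j :: w₄))
            exact s1.trans (s2.trans (s3.trans (s4.trans (s5.trans s6))))
      · -- adj q j
        rw [comp_adj hqj] at h1
        rw [comp_adj hqj.symm] at h2
        simp only [List.cons_append, List.nil_append] at h1 h2
        have hql : (q :: b).length < ℓ := by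
          have := hu; simp only [List.length_cons] at this ⊢; omega
        obtain ⟨w₂, g1, g2⟩ := ihℓ (q :: b).length hql (q :: b) (q :: w₁) i j le_rfl h1
        have hw₁ : b.length = w₁.length := by
          have := h1.length_eq; simp only [List.length_cons] at this; omega
        rcases tri i j with rfl | hij | hij
        · -- i = j
          rw [comp_self] at g1 g2
          simp only [List.nil_append] at g1 g2
          have hbl : b.length < ℓ := by
            have := hu; simp only [List.length_cons] at this; omega
          obtain ⟨w₃, d1, d2⟩ := ihℓ b.length hbl b w₁ q q le_rfl (g1.trans g2.symm)
          rw [comp_self] at d1 d2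
          simp only [List.nil_append] at d1 d2
          refine ⟨q :: i :: b, ?_, ?_⟩
          · rw [comp_self]; exact Beq.refl _
          · rw [comp_self]
            simp only [List.nil_append]
            exact h2.trans (Beq.cons q (Beq.cons i (d2.trans d1.symm)))
        · -- far i j  (letters: adj i q, adj q j, far i j)
          rw [comp_far hij] at g1 ⊢
          rw [comp_far hij.symm] at g2
          simp only [List.cons_append, List.nil_append] at g1 g2 ⊢
          have hbl : b.length < ℓ := by
            have := hu; simp only [List.length_cons] at this; omega
          obtain ⟨w₃, f1, f2⟩ := ihℓ b.length hbl b w₂ q j le_rfl g1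
          rw [comp_adj hqj] at f1
          rw [comp_adj hqj.symm] at f2
          simp only [List.cons_append, List.nil_append] at f1 f2
          have hw₁l : w₁.length < ℓ := by omega
          obtain ⟨w₄, e1, e2⟩ := ihℓ w₁.length hw₁l w₁ w₂ q i le_rfl g2
          rw [comp_adj hpq.symm] at e1
          rw [comp_adj hpq] at e2
          simp only [List.cons_append, List.nil_append] at e1 e2
          -- f2 : w₂ ≈ q::j::w₃, e2 : w₂ ≈ q::i::w₄
          have hjw : Beq n (q :: j :: w₃) (q :: i :: w₄) := f2.symm.trans e2
          have hw₃l : (j :: w₃).length < ℓ := by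
            have hf := f2.length_eq
            have hg := g1.length_eq
            simp only [List.length_cons] at hf hg ⊢
            omega
          obtain ⟨w₅, d1, d2⟩ := ihℓ (j :: w₃).length hw₃l (j :: w₃) (i :: w₄) q q le_rfl hjw
          rw [comp_self] at d1 d2
          simp only [List.nil_append] at d1 d2
          have hji : Beq n (j :: w₃) (i :: w₄) := d1.trans d2.symm
          have hw₃l' : w₃.length < ℓ := by
            simp only [List.length_cons] at hw₃l; omega
          obtain ⟨w₆, c1, c2⟩ := ihℓ w₃.length hw₃l' w₃ w₄ j i le_rfl hji
          rw [comp_far hij.symm] at c1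
          rw [comp_far hij] at c2
          simp only [List.cons_append, List.nil_append] at c1 c2
          refine ⟨q :: i :: j :: q :: w₆, ?_, ?_⟩
          · have s1 : Beq n (q :: i :: b) (q :: i :: j :: q :: w₃) :=
              Beq.cons q (Beq.cons i f1)
            have s2 : Beq n (q :: i :: j :: q :: w₃) (q :: i :: j :: q :: i :: w₆) :=
              Beq.cons q (Beq.cons i (Beq.cons j (Beq.cons q c1)))
            have s3 : Beq n (q :: i :: j :: q :: i :: w₆) (q :: j :: i :: q :: i :: w₆) :=
              Beq.cons q (beq_swap hij (q :: i :: w₆))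
            have s4 : Beq n (q :: j :: i :: q :: i :: w₆) (q :: j :: q :: i :: q :: w₆) :=
              Beq.cons q (Beq.cons j (beq_braid hpq w₆))
            have s5 : Beq n (q :: j :: q :: i :: q :: w₆) (j :: q :: j :: i :: q :: w₆) :=
              beq_braid hqj _
            have s6 : Beq n (j :: q :: j :: i :: q :: w₆) (j :: q :: i :: j :: q :: w₆) :=
              Beq.cons j (Beq.cons q (beq_swap hij.symm (q :: w₆)))
            exact s1.trans (s2.trans (s3.trans (s4.trans (s5.trans s6))))
          · rw [comp_far hij.symm]
            simp only [List.cons_append, List.nil_append]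
            have s1 : Beq n v (q :: j :: i :: q :: w₄) :=
              h2.trans (Beq.cons q (Beq.cons j e1))
            have s2 : Beq n (q :: j :: i :: q :: w₄) (q :: j :: i :: q :: j :: w₆) :=
              Beq.cons q (Beq.cons j (Beq.cons i (Beq.cons q c2)))
            have s3 : Beq n (q :: j :: i :: q :: j :: w₆) (q :: i :: j :: q :: j :: w₆) :=
              Beq.cons q (beq_swap hij.symm (q :: j :: w₆))
            have s4 : Beq n (q :: i :: j :: q :: j :: w₆) (q :: i :: q :: j :: q :: w₆) :=
              Beq.cons q (Beq.cons i (beq_braid hqj.symm w₆))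
            have s5 : Beq n (q :: i :: q :: j :: q :: w₆) (i :: q :: i :: j :: q :: w₆) :=
              beq_braid hpq.symm _
            exact s1.trans (s2.trans (s3.trans (s4.trans s5)))
        · -- adj i j : impossible
          exact absurd hij (fun h => not_adj_chain hpq hqj h)



/-- The canonical projection from words to the braid monoid. -/
def mkw {n : ℕ} (u : List (Ltr n)) : BraidMonoid n :=
  (conGen (BraidRel n)).mk' (FreeMonoid.ofList u)

lemma mkw_append {n : ℕ} (u v : List (Ltr n)) : mkw (u ++ v) = mkw u * mkw v := by
  simp [mkw, ← map_mul]
  rfl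

lemma mkw_nil {n : ℕ} : (mkw ([] : List (Ltr n))) = 1 := by
  rfl

lemma mkw_cons {n : ℕ} (i : Ltr n) (u : List (Ltr n)) :
    mkw (i :: u) = gen i * mkw u := by
  have : (i :: u) = [i] ++ u := rfl
  rw [this, mkw_append]
  rfl

lemma mkw_surjective {n : ℕ} : Function.Surjective (mkw (n := n)) := by
  intro x
  obtain ⟨w, rfl⟩ := Con.mk'_surjective x
  exact ⟨FreeMonoid.toList w, by simp [mkw]; rfl⟩

lemma beq_mkw {n : ℕ} {u v : List (Ltr n)} (h : Beq n u v) : mkw u = mkw v := by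
  obtain ⟨k, hk⟩ := h
  induction hk with
  | refl => rfl
  | cons s c ih =>
    refine Eq.trans ?_ ih
    clear ih c
    cases s with
    | comm a b i j h =>
      have base : mkw [i, j] = mkw [j, i] := by
        rcases h with h | h
        · exact (Con.eq _).2 (ConGen.Rel.of _ _ (BraidRel.comm i j h))
        · exact ((Con.eq _).2 (ConGen.Rel.of _ _ (BraidRel.comm j i h))).symm
      have e1 : a ++ i :: j :: b = a ++ [i, j] ++ b := by simp
      have e2 : a ++ j :: i :: b = a ++ [j, i] ++ b := by simp
      rw [e1, e2, mkw_append, mkw_append, mkw_append, mkw_append, base]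
    | braid a b i j h =>
      have base : mkw [i, j, i] = mkw [j, i, j] := by
        rcases h with h | h
        · exact (Con.eq _).2 (ConGen.Rel.of _ _ (BraidRel.braid i j h))
        · exact ((Con.eq _).2 (ConGen.Rel.of _ _ (BraidRel.braid j i h))).symm
      have e1 : a ++ i :: j :: i :: b = a ++ [i, j, i] ++ b := by simp
      have e2 : a ++ j :: i :: j :: b = a ++ [j, i, j] ++ b := by simp
      rw [e1, e2, mkw_append, mkw_append, mkw_append, mkw_append, base]

/-- The congruence with underlying relation `Beq`. -/
def beqCon (n : ℕ) : Con (FreeMonoid (Ltr n)) where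
  r u v := Beq n (FreeMonoid.toList u) (FreeMonoid.toList v)
  iseqv := ⟨fun u => Beq.refl _, Beq.symm, Beq.trans⟩
  mul' {u v x y} h h' := by
    simp only [FreeMonoid.toList_mul]
    exact (h.append_right _).trans (h'.append_left _)

lemma mkw_injective_beq {n : ℕ} {u v : List (Ltr n)} (h : mkw u = mkw v) : Beq n u v := by
  have hcon : (conGen (BraidRel n)) (FreeMonoid.ofList u) (FreeMonoid.ofList v) :=
    (Con.eq _).1 h
  have hle : conGen (BraidRel n) ≤ beqCon n := by
    refine Con.conGen_le.2 ?_
    intro x y hxy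
    cases hxy with
    | comm i j h => exact (Bstep.comm [] [] i j (.inl h)).beq
    | braid i j h => exact (Bstep.braid [] [] i j (.inl h)).beq
  simpa [beqCon] using hle hcon

lemma mkw_eq_iff {n : ℕ} {u v : List (Ltr n)} : mkw u = mkw v ↔ Beq n u v :=
  ⟨mkw_injective_beq, beq_mkw⟩


/-! ### Cancellativity -/

lemma beq_cancel_head {n : ℕ} {x : Ltr n} {u v : List (Ltr n)}
    (h : Beq n (x :: u) (x :: v)) : Beq n u v := by
  obtain ⟨w, h1, h2⟩ := key u.length u v x x le_rfl h
  rw [comp_self] at h1 h2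
  simp only [List.nil_append] at h1 h2
  exact h1.trans h2.symm

lemma beq_cancel_left {n : ℕ} (a : List (Ltr n)) {u v : List (Ltr n)}
    (h : Beq n (a ++ u) (a ++ v)) : Beq n u v := by
  induction a with
  | nil => simpa using h
  | cons x a' ih =>
    simp only [List.cons_append] at h
    exact ih (beq_cancel_head h)

lemma Bstep.rev {n : ℕ} {u v : List (Ltr n)} (h : Bstep n u v) :
    Bstep n u.reverse v.reverse := by
  cases h with
  | comm a b i j h =>
    have := Bstep.comm b.reverse a.reverse j i h.symm
    simpa [List.reverse_append] using this
  | braid a b i j h =>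
    have := Bstep.braid b.reverse a.reverse i j h
    simpa [List.reverse_append] using this

lemma Beq.rev {n : ℕ} {u v : List (Ltr n)} (h : Beq n u v) :
    Beq n u.reverse v.reverse := by
  obtain ⟨k, hk⟩ := h
  induction hk with
  | refl => exact Beq.refl _
  | cons s _ ih => exact s.rev.beq.trans ih

lemma beq_cancel_right {n : ℕ} (d : List (Ltr n)) {u v : List (Ltr n)}
    (h : Beq n (u ++ d) (v ++ d)) : Beq n u v := by
  have h' := h.rev
  simp only [List.reverse_append] at h'
  have := (beq_cancel_left d.reverse h').rev
  simpa using this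

lemma bm_mul_left_cancel {n : ℕ} {a x y : BraidMonoid n} (h : a * x = a * y) : x = y := by
  obtain ⟨wa, rfl⟩ := mkw_surjective a
  obtain ⟨wx, rfl⟩ := mkw_surjective x
  obtain ⟨wy, rfl⟩ := mkw_surjective y
  rw [← mkw_append, ← mkw_append, mkw_eq_iff] at h
  rw [mkw_eq_iff]
  exact beq_cancel_left wa h

lemma bm_mul_right_cancel {n : ℕ} {a x y : BraidMonoid n} (h : x * a = y * a) : x = y := by
  obtain ⟨wa, rfl⟩ := mkw_surjective a
  obtain ⟨wx, rfl⟩ := mkw_surjective x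
  obtain ⟨wy, rfl⟩ := mkw_surjective y
  rw [← mkw_append, ← mkw_append, mkw_eq_iff] at h
  rw [mkw_eq_iff]
  exact beq_cancel_right wa h

/-! ### Divisibility by generators -/

lemma mkw_singleton {n : ℕ} (i : Ltr n) : mkw [i] = gen i := rfl

lemma mkw_eq_one {n : ℕ} {w : List (Ltr n)} (h : mkw w = 1) : w = [] := by
  have : mkw w = mkw [] := h
  rw [mkw_eq_iff] at this
  have := this.length_eq
  simpa using this

lemma exists_gen_head {n : ℕ} {z : BraidMonoid n} (h : z ≠ 1) :
    ∃ (i : Ltr n) (y : BraidMonoid n), z = gen i * y := by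
  obtain ⟨w, rfl⟩ := mkw_surjective z
  cases w with
  | nil => exact absurd rfl h
  | cons i w' => exact ⟨i, mkw w', mkw_cons i w'⟩

lemma exists_gen_last {n : ℕ} {z : BraidMonoid n} (h : z ≠ 1) :
    ∃ (i : Ltr n) (y : BraidMonoid n), z = y * gen i := by
  obtain ⟨w, rfl⟩ := mkw_surjective z
  rcases List.eq_nil_or_concat w with rfl | ⟨w', i, rfl⟩
  · exact absurd rfl h
  · exact ⟨i, mkw w', by rw [← mkw_singleton, ← mkw_append, List.concat_eq_append]⟩
-- ANALYTIC PART (appended to dev file for testing)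


lemma ldvd_trans {n : ℕ} {a b c : BraidMonoid n} (h1 : ldvd a b) (h2 : ldvd b c) :
    ldvd a c := by
  obtain ⟨u, rfl⟩ := h1; obtain ⟨v, rfl⟩ := h2
  exact ⟨u * v, mul_assoc a u v⟩

lemma rdvd_trans {n : ℕ} {a b c : BraidMonoid n} (h1 : rdvd a b) (h2 : rdvd b c) :
    rdvd a c := by
  obtain ⟨u, rfl⟩ := h1; obtain ⟨v, rfl⟩ := h2
  exact ⟨v * u, (mul_assoc v u a).symm⟩

lemma gen_mul_ne_one {n : ℕ} (i : Ltr n) (y : BraidMonoid n) : gen i * y ≠ 1 := by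
  obtain ⟨w, rfl⟩ := mkw_surjective y
  rw [← mkw_cons]
  intro hc
  exact absurd (mkw_eq_one hc) (by simp)

lemma mul_gen_ne_one {n : ℕ} (i : Ltr n) (y : BraidMonoid n) : y * gen i ≠ 1 := by
  obtain ⟨w, rfl⟩ := mkw_surjective y
  rw [← mkw_singleton, ← mkw_append]
  intro hc
  exact absurd (mkw_eq_one hc) (by simp)

/-- Alternating-sign sum over all subsets, weighted by an indicator of a
downward-closed family given as the powerset of `R`. -/
lemma sum_neg_one_pow_indicator {ι : Type*} [Fintype ι] [DecidableEq ι]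
    (P : Finset ι → Prop) (R : Finset ι) (hiff : ∀ X, P X ↔ X ⊆ R) (c : ℝ) :
    (∑ X : Finset ι, (-1 : ℝ) ^ X.card * (if P X then c else 0)) =
      if R = ∅ then c else 0 := by
  classical
  have h1 : ∀ X : Finset ι,
      (-1 : ℝ) ^ X.card * (if P X then c else 0) =
        if X ∈ R.powerset then (-1 : ℝ) ^ X.card * c else 0 := by
    intro X
    by_cases hX : X ⊆ R
    · rw [if_pos ((hiff X).2 hX), if_pos (Finset.mem_powerset.2 hX)]
    · rw [if_neg (fun hP => hX ((hiff X).1 hP)), if_neg (fun hm => hX (Finset.mem_powerset.1 hm)),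
        mul_zero]
  rw [Finset.sum_congr rfl fun X _ => h1 X, Finset.sum_ite_mem, Finset.univ_inter,
    ← Finset.sum_mul]
  have hpow : (∑ X ∈ R.powerset, (-1 : ℝ) ^ X.card) = if R = ∅ then 1 else 0 := by
    have hz := Finset.sum_powerset_neg_one_pow_card (x := R)
    have : ((∑ X ∈ R.powerset, (-1 : ℤ) ^ X.card : ℤ) : ℝ) =
        (∑ X ∈ R.powerset, (-1 : ℝ) ^ X.card) := by push_cast; rfl
    rw [← this, hz]
    split_ifs <;> simp
  rw [hpow]
  split_ifs <;> simp



/-- Möbius inversion on `Br_n` for absolutely summable functions: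
`h` is the Möbius transform of `f` iff `f(x) = Σ_y h(x·y)` for every `x`. -/
theorem mobius_inversion_braid (n : ℕ) (hn : 2 ≤ n)
    (Δhat : Finset (Fin (n - 1)) → BraidMonoid n)
    (hlub_l : ∀ X : Finset (Fin (n - 1)),
      (∀ i ∈ X, ldvd (gen i) (Δhat X)) ∧
        ∀ z : BraidMonoid n, (∀ i ∈ X, ldvd (gen i) z) → ldvd (Δhat X) z)
    (hlub_r : ∀ X : Finset (Fin (n - 1)),
      (∀ i ∈ X, rdvd (gen i) (Δhat X)) ∧
        ∀ z : BraidMonoid n, (∀ i ∈ X, rdvd (gen i) z) → rdvd (Δhat X) z)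
    (f h : BraidMonoid n → ℝ)
    (hf : Summable fun x : BraidMonoid n => |f x|)
    (hh : Summable fun x : BraidMonoid n => |h x|) :
    (∀ x : BraidMonoid n,
        h x = ∑ X : Finset (Fin (n - 1)), (-1 : ℝ) ^ X.card * f (x * Δhat X)) ↔
      (∀ x : BraidMonoid n, f x = ∑' y : BraidMonoid n, h (x * y)) := by
  have hfs : Summable f := hf.of_abs
  have hhs : Summable h := hh.of_abs
  constructor
  · -- Möbius transform ⇒ summation formula
    intro G x
    have hsum2 : ∀ X : Finset (Fin (n - 1)),
        Summable fun y : BraidMonoid n => f (x * y * Δhat X) := by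
      intro X
      refine hfs.comp_injective fun a b e => ?_
      exact bm_mul_left_cancel (bm_mul_right_cancel e)
    have hxz : Summable fun z : BraidMonoid n => f (x * z) :=
      hfs.comp_injective fun a b e => bm_mul_left_cancel e
    set F : Finset (Fin (n - 1)) → BraidMonoid n → ℝ :=
      fun X z => if rdvd (Δhat X) z then f (x * z) else 0 with hF
    have hFs : ∀ X, Summable (F X) := by
      intro X
      refine (hxz.indicator {z | rdvd (Δhat X) z}).congr fun z => ?_
      simp [hF, Set.indicator_apply]
    have hFt : ∀ X, (∑' y, f (x * y * Δhat X)) = ∑' z, F X z := by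
      intro X
      have hrinj : Function.Injective fun y : BraidMonoid n => y * Δhat X :=
        fun a b e => bm_mul_right_cancel e
      have hsupp : Function.support (F X) ⊆
          Set.range fun y : BraidMonoid n => y * Δhat X := by
        intro z hz
        by_cases hd : rdvd (Δhat X) z
        · obtain ⟨y, hy⟩ := hd; exact ⟨y, hy.symm⟩
        · simp [hF, hd] at hz
      rw [← Function.Injective.tsum_eq hrinj hsupp]
      refine tsum_congr fun y => ?_
      have hd : rdvd (Δhat X) (y * Δhat X) := ⟨y, rfl⟩
      simp only [hF, if_pos hd, mul_assoc]
    have main : (∑' y, h (x * y)) = f x := by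
      calc (∑' y, h (x * y))
          = ∑' y, ∑ X : Finset (Fin (n - 1)), (-1 : ℝ) ^ X.card * f (x * y * Δhat X) :=
            tsum_congr fun y => G (x * y)
        _ = ∑ X : Finset (Fin (n - 1)), ∑' y, (-1 : ℝ) ^ X.card * f (x * y * Δhat X) :=
            Summable.tsum_finsetSum fun X _ => (hsum2 X).mul_left _
        _ = ∑ X : Finset (Fin (n - 1)), (-1 : ℝ) ^ X.card * ∑' y, f (x * y * Δhat X) := by
            simp_rw [tsum_mul_left]
        _ = ∑ X : Finset (Fin (n - 1)), (-1 : ℝ) ^ X.card * ∑' z, F X z := by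
            refine Finset.sum_congr rfl fun X _ => ?_
            rw [hFt]
        _ = ∑ X : Finset (Fin (n - 1)), ∑' z, (-1 : ℝ) ^ X.card * F X z := by
            simp_rw [tsum_mul_left]
        _ = ∑' z, ∑ X : Finset (Fin (n - 1)), (-1 : ℝ) ^ X.card * F X z :=
            (Summable.tsum_finsetSum fun X _ => (hFs X).mul_left _).symm
        _ = ∑' z, (if z = (1 : BraidMonoid n) then f (x * z) else 0) := by
            refine tsum_congr fun z => ?_
            have hiff : ∀ X : Finset (Fin (n - 1)), rdvd (Δhat X) z ↔
                X ⊆ Finset.univ.filter fun i => rdvd (gen i) z := by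
              intro X
              constructor
              · intro hd i hi
                simp only [Finset.mem_filter, Finset.mem_univ, true_and]
                exact rdvd_trans ((hlub_r X).1 i hi) hd
              · intro hsub
                refine (hlub_r X).2 z fun i hi => ?_
                have := hsub hi
                simpa using this
            have hR : ((Finset.univ.filter fun i => rdvd (gen i) z) = ∅) ↔ z = 1 := by
              constructor
              · intro hemp
                by_contra hz
                obtain ⟨i, y, hy⟩ := exists_gen_last hz
                have hi : i ∈ Finset.univ.filter fun i => rdvd (gen i) z := by
                  simp only [Finset.mem_filter, Finset.mem_univ, true_and]
                  exact ⟨y, hy⟩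
                rw [hemp] at hi
                simp at hi
              · rintro rfl
                ext i
                simp only [Finset.mem_filter, Finset.mem_univ, true_and,
                  Finset.notMem_empty, iff_false]
                rintro ⟨y, hy⟩
                exact mul_gen_ne_one i y hy.symm
            have := sum_neg_one_pow_indicator (fun X => rdvd (Δhat X) z) _ hiff (f (x * z))
            simp only [hF]
            rw [this, if_congr hR rfl rfl]
        _ = ∑' z, (if z = (1 : BraidMonoid n) then f x else 0) := by
            refine tsum_congr fun z => ?_
            split_ifs with hz
            · rw [hz, mul_one]
            · rfl
        _ = f x := tsum_ite_eq (1 : BraidMonoid n) (fun _ => f x)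
    exact main.symm
  · -- summation formula ⇒ Möbius transform
    intro H x
    have hxz : Summable fun z : BraidMonoid n => h (x * z) :=
      hhs.comp_injective fun a b e => bm_mul_left_cancel e
    set F : Finset (Fin (n - 1)) → BraidMonoid n → ℝ :=
      fun X z => if ldvd (Δhat X) z then h (x * z) else 0 with hF
    have hFs : ∀ X, Summable (F X) := by
      intro X
      refine (hxz.indicator {z | ldvd (Δhat X) z}).congr fun z => ?_
      simp [hF, Set.indicator_apply]
    have hFt : ∀ X, (∑' y, h (x * Δhat X * y)) = ∑' z, F X z := by
      intro X
      have hlinj : Function.Injective fun y : BraidMonoid n => Δhat X * y :=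
        fun a b e => bm_mul_left_cancel e
      have hsupp : Function.support (F X) ⊆
          Set.range fun y : BraidMonoid n => Δhat X * y := by
        intro z hz
        by_cases hd : ldvd (Δhat X) z
        · obtain ⟨y, hy⟩ := hd; exact ⟨y, hy.symm⟩
        · simp [hF, hd] at hz
      rw [← Function.Injective.tsum_eq hlinj hsupp]
      refine tsum_congr fun y => ?_
      have hd : ldvd (Δhat X) (Δhat X * y) := ⟨y, rfl⟩
      simp only [hF, if_pos hd, mul_assoc]
    have main : (∑ X : Finset (Fin (n - 1)), (-1 : ℝ) ^ X.card * f (x * Δhat X)) = h x := by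
      calc (∑ X : Finset (Fin (n - 1)), (-1 : ℝ) ^ X.card * f (x * Δhat X))
          = ∑ X : Finset (Fin (n - 1)), (-1 : ℝ) ^ X.card * ∑' y, h (x * Δhat X * y) := by
            refine Finset.sum_congr rfl fun X _ => ?_
            rw [H (x * Δhat X)]
        _ = ∑ X : Finset (Fin (n - 1)), (-1 : ℝ) ^ X.card * ∑' z, F X z := by
            refine Finset.sum_congr rfl fun X _ => ?_
            rw [hFt]
        _ = ∑ X : Finset (Fin (n - 1)), ∑' z, (-1 : ℝ) ^ X.card * F X z := by
            simp_rw [tsum_mul_left]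
        _ = ∑' z, ∑ X : Finset (Fin (n - 1)), (-1 : ℝ) ^ X.card * F X z :=
            (Summable.tsum_finsetSum fun X _ => (hFs X).mul_left _).symm
        _ = ∑' z, (if z = (1 : BraidMonoid n) then h (x * z) else 0) := by
            refine tsum_congr fun z => ?_
            have hiff : ∀ X : Finset (Fin (n - 1)), ldvd (Δhat X) z ↔
                X ⊆ Finset.univ.filter fun i => ldvd (gen i) z := by
              intro X
              constructor
              · intro hd i hi
                simp only [Finset.mem_filter, Finset.mem_univ, true_and]
                exact ldvd_trans ((hlub_l X).1 i hi) hd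
              · intro hsub
                refine (hlub_l X).2 z fun i hi => ?_
                have := hsub hi
                simpa using this
            have hR : ((Finset.univ.filter fun i => ldvd (gen i) z) = ∅) ↔ z = 1 := by
              constructor
              · intro hemp
                by_contra hz
                obtain ⟨i, y, hy⟩ := exists_gen_head hz
                have hi : i ∈ Finset.univ.filter fun i => ldvd (gen i) z := by
                  simp only [Finset.mem_filter, Finset.mem_univ, true_and]
                  exact ⟨y, hy⟩
                rw [hemp] at hi
                simp at hi
              · rintro rfl
                ext i
                simp only [Finset.mem_filter, Finset.mem_univ, true_and,
                  Finset.notMem_empty, iff_false]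
                rintro ⟨y, hy⟩
                exact gen_mul_ne_one i y hy.symm
            have := sum_neg_one_pow_indicator (fun X => ldvd (Δhat X) z) _ hiff (h (x * z))
            simp only [hF]
            rw [this, if_congr hR rfl rfl]
        _ = ∑' z, (if z = (1 : BraidMonoid n) then h x else 0) := by
            refine tsum_congr fun z => ?_
            split_ifs with hz
            · rw [hz, mul_one]
            · rfl
        _ = h x := tsum_ite_eq (1 : BraidMonoid n) (fun _ => h x)
    exact main.symm

end BraidMeasure
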